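/- Let X be a compact metric space with its Borel σ-algebra and let P₁ be a Borel probability measure on X. Then the map P ↦ D(P‖P₁), from the space of Borel probability measures on X equipped with the topology of weak convergence to [0,∞], is lower semicontinuous: whenever Pˢ converges weakly to P₀, one has liminf_{s→∞} D(Pˢ‖P₁) ≥ D(P₀‖P₁). -/

import Mathlib

open MeasureTheory Filter Topology
open scoped ENNReal
open scoped BoundedContinuousFunction

/- Kullback–Leibler divergence `D(P‖Q)`, valued in `[0,∞]`: it is
`∫ log(dP/dQ) dP` when `P ≪ Q` (and the integrand is `P`-integrable), and `∞` otherwise. -/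
open scoped Classical in
noncomputable def klDiv {X : Type*} [MeasurableSpace X] (P Q : Measure X) : ℝ≥0∞ :=
  if P ≪ Q ∧ MeasureTheory.Integrable (fun x => Real.log (P.rnDeriv Q x).toReal) P
  then ENNReal.ofReal (∫ x, Real.log (P.rnDeriv Q x).toReal ∂P) else ⊤

set_option linter.unusedSectionVars false

section KLAux
variable {X : Type*} [MetricSpace X] [CompactSpace X] [MeasurableSpace X] [BorelSpace X]
variable (P Q : Measure X) [IsProbabilityMeasure P] [IsProbabilityMeasure Q]



lemma key_ineq {t y : ℝ} (ht : 0 ≤ t) : t * y + t ≤ t * Real.log t + Real.exp y := by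
  rcases eq_or_lt_of_le ht with h | h
  · simp [← h, (Real.exp_pos y).le]
  · have h1 : y - Real.log t + 1 ≤ Real.exp (y - Real.log t) := Real.add_one_le_exp _
    have h2 : Real.exp (y - Real.log t) = Real.exp y / t := by
      rw [Real.exp_sub, Real.exp_log h]
    rw [h2] at h1
    have h3 := mul_le_mul_of_nonneg_left h1 ht
    have ht' : t * (Real.exp y / t) = Real.exp y := by field_simp
    nlinarith

lemma exp_sub_exp_le {u v n : ℝ} (hu : u ≤ n) :
    Real.exp u - Real.exp v ≤ Real.exp n * |u - v| := by
  rcases le_total u v with h | h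
  · have : Real.exp u ≤ Real.exp v := Real.exp_le_exp.mpr h
    have := mul_nonneg (Real.exp_pos n).le (abs_nonneg (u - v))
    linarith
  · have hw : 0 ≤ u - v := by linarith
    have h1 : Real.exp (-(u - v)) ≥ 1 - (u - v) := by
      have := Real.add_one_le_exp (-(u - v)); linarith
    have h2 : Real.exp (u - v) * Real.exp (-(u - v)) = 1 := by
      rw [← Real.exp_add]; simp
    have h3 : Real.exp u = Real.exp v * Real.exp (u - v) := by
      rw [← Real.exp_add]; ring_nf
    have h4 : Real.exp u ≤ Real.exp n := Real.exp_le_exp.mpr hu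
    have h5 : |u - v| = u - v := abs_of_nonneg hw
    nlinarith [Real.exp_pos (u - v), Real.exp_pos v, Real.exp_pos (-(u-v)), Real.exp_pos u]



lemma integrable_exp_bcf (f : X →ᵇ ℝ) (μ : Measure X) [IsFiniteMeasure μ] :
    Integrable (fun x => Real.exp (f x)) μ := by
  refine (integrable_const (Real.exp ‖f‖)).mono' ?_ ?_
  · exact (Real.continuous_exp.comp f.continuous).aestronglyMeasurable
  · refine ae_of_all _ fun x => ?_
    rw [Real.norm_eq_abs, abs_of_pos (Real.exp_pos _)]
    exact Real.exp_le_exp.mpr (le_trans (le_abs_self _) (f.norm_coe_le_norm x))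

lemma phi_le_klDiv (f : X →ᵇ ℝ) :
    ENNReal.ofReal (∫ x, f x ∂P - ∫ x, Real.exp (f x) ∂Q + 1) ≤ klDiv P Q := by
  rw [klDiv]
  split_ifs with h
  · obtain ⟨hac, hint⟩ := h
    apply ENNReal.ofReal_le_ofReal
    have hfP : Integrable (fun x => f x) P := f.integrable P
    have hexpQ : Integrable (fun x => Real.exp (f x)) Q := integrable_exp_bcf f Q
    have haf : Integrable (fun x => (P.rnDeriv Q x).toReal • f x) Q :=
      (integrable_rnDeriv_smul_iff hac).mpr hfP
    have hallr : Integrable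
        (fun x => (P.rnDeriv Q x).toReal • Real.log (P.rnDeriv Q x).toReal) Q :=
      (integrable_rnDeriv_smul_iff hac).mpr hint
    have ha : Integrable (fun x => (P.rnDeriv Q x).toReal) Q :=
      Measure.integrable_toReal_rnDeriv
    have hInt : ∫ x, ((P.rnDeriv Q x).toReal • f x + (P.rnDeriv Q x).toReal) ∂Q
        ≤ ∫ x, ((P.rnDeriv Q x).toReal • Real.log (P.rnDeriv Q x).toReal
            + Real.exp (f x)) ∂Q :=
      integral_mono (haf.add ha) (hallr.add hexpQ) (fun x => key_ineq ENNReal.toReal_nonneg)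
    rw [integral_add haf ha, integral_add hallr hexpQ,
        integral_rnDeriv_smul hac, integral_rnDeriv_smul hac,
        Measure.integral_toReal_rnDeriv hac] at hInt
    simp only [measure_univ, ENNReal.toReal_one, probReal_univ] at hInt
    linarith
  · exact le_top





/-- clamped log-likelihood ratio, sent to `-n` where the density vanishes. -/
noncomputable def gn (n : ℕ) (x : X) : ℝ :=
  if P.rnDeriv Q x = 0 then -(n : ℝ)
  else max (min (Real.log (P.rnDeriv Q x).toReal) n) (-(n : ℝ))

lemma gn_meas (n : ℕ) : Measurable (gn P Q n) := by
  refine Measurable.ite ((Measure.measurable_rnDeriv P Q) (measurableSet_singleton 0))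
    measurable_const ?_
  exact ((Measure.measurable_rnDeriv P Q).ennreal_toReal.log.min measurable_const).max
    measurable_const

lemma gn_abs_le (n : ℕ) (x : X) : |gn P Q n x| ≤ n := by
  rw [gn, abs_le]
  split_ifs with h
  · exact ⟨le_refl _, neg_le_self (by positivity)⟩
  · exact ⟨le_max_right _ _, max_le (min_le_right _ _) (neg_le_self (by positivity))⟩

lemma gn_integrable (n : ℕ) (μ : Measure X) [IsFiniteMeasure μ] :
    Integrable (gn P Q n) μ := by
  refine (integrable_const (n : ℝ)).mono' ((gn_meas P Q n).aestronglyMeasurable) ?_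
  exact ae_of_all _ fun x => gn_abs_le P Q n x

lemma exp_gn_integrable (n : ℕ) (μ : Measure X) [IsFiniteMeasure μ] :
    Integrable (fun x => Real.exp (gn P Q n x)) μ := by
  refine (integrable_const (Real.exp n)).mono'
    (((gn_meas P Q n).exp).aestronglyMeasurable) ?_
  refine ae_of_all _ fun x => ?_
  rw [Real.norm_eq_abs, abs_of_pos (Real.exp_pos _)]
  exact Real.exp_le_exp.mpr ((le_abs_self _).trans (gn_abs_le P Q n x))

lemma integral_exp_gn_le (hac : P ≪ Q) (n : ℕ) :
    ∫ x, Real.exp (gn P Q n x) ∂Q ≤ 1 + Real.exp (-(n : ℝ)) := by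
  have hbd : ∀ᵐ x ∂Q,
      Real.exp (gn P Q n x) ≤ (P.rnDeriv Q x).toReal + Real.exp (-(n : ℝ)) := by
    filter_upwards [Measure.rnDeriv_lt_top P Q] with x hx
    rw [gn]
    split_ifs with h
    · simp [h]
    · have ht : 0 < (P.rnDeriv Q x).toReal := ENNReal.toReal_pos h hx.ne
      have h1 : Real.exp (max (min (Real.log (P.rnDeriv Q x).toReal) n) (-(n : ℝ)))
          = max (Real.exp (min (Real.log (P.rnDeriv Q x).toReal) n)) (Real.exp (-(n : ℝ))) :=
        Real.exp_monotone.map_max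
      rw [h1]
      refine max_le ?_ (le_add_of_nonneg_left ENNReal.toReal_nonneg)
      refine le_add_of_le_of_nonneg ?_ (Real.exp_pos _).le
      calc Real.exp (min (Real.log (P.rnDeriv Q x).toReal) n)
          ≤ Real.exp (Real.log (P.rnDeriv Q x).toReal) :=
            Real.exp_le_exp.mpr (min_le_left _ _)
        _ = (P.rnDeriv Q x).toReal := Real.exp_log ht
  calc ∫ x, Real.exp (gn P Q n x) ∂Q
      ≤ ∫ x, ((P.rnDeriv Q x).toReal + Real.exp (-(n : ℝ))) ∂Q :=
        integral_mono_ae (exp_gn_integrable P Q n Q)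
          ((Measure.integrable_toReal_rnDeriv).add (integrable_const _)) hbd
    _ = 1 + Real.exp (-(n : ℝ)) := by
        rw [integral_add Measure.integrable_toReal_rnDeriv (integrable_const _),
          Measure.integral_toReal_rnDeriv hac, integral_const]
        simp [measure_univ]

lemma gn_ae_eq (hac : P ≪ Q) (n : ℕ) :
    gn P Q n =ᵐ[P]
      fun x => max (min (Real.log (P.rnDeriv Q x).toReal) n) (-(n : ℝ)) := by
  filter_upwards [Measure.rnDeriv_pos hac] with x hx
  rw [gn, if_neg hx.ne']

lemma clamp_abs_le (t : ℝ) (n : ℕ) : |max (min t n) (-(n : ℝ))| ≤ |t| := by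
  rw [abs_le]
  constructor
  · refine le_trans ?_ (le_max_left _ _)
    rcases le_or_gt 0 t with h | h
    · have : (0:ℝ) ≤ min t n := le_min h (by positivity)
      linarith [neg_abs_le t, abs_nonneg t]
    · have : min t n = t := min_eq_left (h.le.trans (by positivity))
      rw [this]
      exact neg_abs_le t
  · refine max_le ((min_le_left _ _).trans (le_abs_self t)) ?_
    have : (0:ℝ) ≤ (n:ℝ) := by positivity
    linarith [abs_nonneg t]

lemma clamp_tendsto (t : ℝ) :
    Tendsto (fun n : ℕ => max (min t n) (-(n : ℝ))) atTop (𝓝 t) := by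
  refine tendsto_const_nhds.congr' ?_
  rw [EventuallyEq, eventually_atTop]
  refine ⟨⌈|t|⌉₊, fun n hn => ?_⟩
  have h1 : |t| ≤ (n : ℝ) := (Nat.le_ceil _).trans (by exact_mod_cast hn)
  have h2 : min t n = t := min_eq_left ((le_abs_self t).trans h1)
  rw [h2, max_eq_left]
  linarith [neg_abs_le t]

lemma tendsto_integral_gn_of_integrable (hac : P ≪ Q)
    (hint : Integrable (fun x => Real.log (P.rnDeriv Q x).toReal) P) :
    Tendsto (fun n => ∫ x, gn P Q n x ∂P) atTop
      (𝓝 (∫ x, Real.log (P.rnDeriv Q x).toReal ∂P)) := by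
  refine tendsto_integral_of_dominated_convergence
    (fun x => |Real.log (P.rnDeriv Q x).toReal|)
    (fun n => (gn_meas P Q n).aestronglyMeasurable) hint.abs ?_ ?_
  · intro n
    filter_upwards [gn_ae_eq P Q hac n] with x hx
    rw [Real.norm_eq_abs, hx]
    exact clamp_abs_le _ n
  · filter_upwards [Measure.rnDeriv_pos hac] with x hx
    have : ∀ n : ℕ, gn P Q n x
        = max (min (Real.log (P.rnDeriv Q x).toReal) n) (-(n : ℝ)) := fun n => by
      rw [gn, if_neg hx.ne']
    simp only [this]
    exact clamp_tendsto _


lemma aux_neg (t : ℝ) (ht : 0 ≤ t) : |t * min (Real.log t) 0| ≤ 1 := by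
  rcases eq_or_lt_of_le ht with h | h
  · simp [← h]
  rcases le_or_gt 1 t with h1 | h1
  · rw [min_eq_right (Real.log_nonneg h1)]
    simp
  · have hlog : Real.log t < 0 := Real.log_neg h h1
    rw [min_eq_left hlog.le, abs_of_nonpos (mul_nonpos_of_nonneg_of_nonpos ht hlog.le)]
    have h2 : Real.log t⁻¹ ≤ t⁻¹ - 1 := Real.log_le_sub_one_of_pos (inv_pos.mpr h)
    rw [Real.log_inv] at h2
    have h3 : 0 < t⁻¹ := inv_pos.mpr h
    have h4 : t * t⁻¹ = 1 := mul_inv_cancel₀ h.ne'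
    nlinarith

lemma negpart_integrable (hac : P ≪ Q) :
    Integrable (fun x => min (Real.log (P.rnDeriv Q x).toReal) 0) P := by
  rw [← integrable_rnDeriv_smul_iff hac]
  refine (integrable_const (1 : ℝ)).mono' ?_ (ae_of_all _ fun x => ?_)
  · exact ((Measure.measurable_rnDeriv P Q).ennreal_toReal.smul
      (((Measure.measurable_rnDeriv P Q).ennreal_toReal.log).min
        measurable_const)).aestronglyMeasurable
  · rw [smul_eq_mul, Real.norm_eq_abs]
    exact aux_neg (P.rnDeriv Q x).toReal ENNReal.toReal_nonneg

lemma pospart_lintegral (hac : P ≪ Q)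
    (hnint : ¬ Integrable (fun x => Real.log (P.rnDeriv Q x).toReal) P) :
    ∫⁻ x, ENNReal.ofReal (max (Real.log (P.rnDeriv Q x).toReal) 0) ∂P = ⊤ := by
  by_contra h
  have hmeas : Measurable fun x => max (Real.log (P.rnDeriv Q x).toReal) 0 :=
    (Measure.measurable_rnDeriv P Q).ennreal_toReal.log.max measurable_const
  have hint : Integrable (fun x => max (Real.log (P.rnDeriv Q x).toReal) 0) P := by
    refine ⟨hmeas.aestronglyMeasurable, ?_⟩
    rw [hasFiniteIntegral_iff_norm]
    have : ∀ x, ENNReal.ofReal ‖max (Real.log (P.rnDeriv Q x).toReal) 0‖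
        = ENNReal.ofReal (max (Real.log (P.rnDeriv Q x).toReal) 0) := fun x => by
      rw [Real.norm_eq_abs, abs_of_nonneg (le_max_right _ _)]
    simp only [this]
    exact lt_top_iff_ne_top.mpr h
  apply hnint
  have := hint.add (negpart_integrable P Q hac)
  refine this.congr (ae_of_all _ fun x => ?_)
  simpa using max_add_min (Real.log (P.rnDeriv Q x).toReal) 0

lemma clamp_split (t : ℝ) (n : ℕ) :
    max (min t n) (-(n : ℝ)) = min (max t 0) n + max (min t 0) (-(n : ℝ)) := by
  rcases le_or_gt 0 t with ht | ht
  · rw [max_eq_left ht, min_eq_right ht,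
      max_eq_left (neg_nonpos.mpr (by positivity : (0:ℝ) ≤ (n:ℝ))),
      max_eq_left (le_min (by linarith [neg_nonpos.mpr (by positivity : (0:ℝ) ≤ (n:ℝ))])
        (neg_le_self (by positivity)))]
    ring
  · rw [max_eq_right ht.le, min_eq_left ht.le,
      min_eq_left (by positivity : (0:ℝ) ≤ (n:ℝ)),
      min_eq_left (ht.le.trans (by positivity))]
    ring

lemma tendsto_integral_gn_atTop (hac : P ≪ Q)
    (hnint : ¬ Integrable (fun x => Real.log (P.rnDeriv Q x).toReal) P) :
    Tendsto (fun n => ∫ x, gn P Q n x ∂P) atTop atTop := by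
  set l := fun x => Real.log (P.rnDeriv Q x).toReal with hl
  have hlmeas : Measurable l := (Measure.measurable_rnDeriv P Q).ennreal_toReal.log
  -- positive part
  have hposmeas : ∀ n : ℕ, Measurable fun x => min (max (l x) 0) (n : ℝ) := fun n =>
    (hlmeas.max measurable_const).min measurable_const
  have hposint : ∀ n : ℕ, Integrable (fun x => min (max (l x) 0) (n : ℝ)) P := by
    intro n
    refine (integrable_const (n : ℝ)).mono' (hposmeas n).aestronglyMeasurable
      (ae_of_all _ fun x => ?_)
    rw [Real.norm_eq_abs, abs_of_nonneg (le_min (le_max_right _ _) (by positivity))]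
    exact min_le_right _ _
  have key : Tendsto (fun n : ℕ => ∫⁻ x, ENNReal.ofReal (min (max (l x) 0) (n : ℝ)) ∂P)
      atTop (𝓝 ⊤) := by
    rw [← pospart_lintegral P Q hac hnint]
    refine lintegral_tendsto_of_tendsto_of_monotone
      (fun n => ((hposmeas n).ennreal_ofReal).aemeasurable) ?_ ?_
    · refine ae_of_all _ fun x => ?_
      intro a b hab
      exact ENNReal.ofReal_le_ofReal (le_min (min_le_left _ _)
        ((min_le_right _ _).trans (by exact_mod_cast hab)))
    · refine ae_of_all _ fun x => ?_
      refine tendsto_const_nhds.congr' ?_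
      rw [EventuallyEq, eventually_atTop]
      refine ⟨⌈max (l x) 0⌉₊, fun n hn => ?_⟩
      congr 1
      exact (min_eq_left ((Nat.le_ceil _).trans (by exact_mod_cast hn))).symm
  have hJtend : Tendsto (fun n : ℕ => ∫ x, min (max (l x) 0) (n : ℝ) ∂P) atTop atTop := by
    rw [tendsto_atTop]
    intro M
    have hfin : ∀ n : ℕ, (∫⁻ x, ENNReal.ofReal (min (max (l x) 0) (n : ℝ)) ∂P) ≠ ⊤ := by
      intro n
      refine ne_top_of_le_ne_top ?_ (lintegral_mono fun x =>
        ENNReal.ofReal_le_ofReal (min_le_right _ _))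
      rw [lintegral_const, measure_univ, mul_one]
      exact ENNReal.ofReal_ne_top
    have heq : ∀ n : ℕ, ∫ x, min (max (l x) 0) (n : ℝ) ∂P
        = (∫⁻ x, ENNReal.ofReal (min (max (l x) 0) (n : ℝ)) ∂P).toReal := by
      intro n
      exact integral_eq_lintegral_of_nonneg_ae
        (ae_of_all _ fun x => le_min (le_max_right _ _) (by positivity))
        (hposmeas n).aestronglyMeasurable
    have hev := key (Ioi_mem_nhds (show ENNReal.ofReal M < ⊤ from ENNReal.ofReal_lt_top))
    rw [tendsto_def] at key
    filter_upwards [hev] with n hn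
    rw [heq n]
    have : ENNReal.ofReal M ≤ ∫⁻ x, ENNReal.ofReal (min (max (l x) 0) (n : ℝ)) ∂P :=
      le_of_lt hn
    exact (ENNReal.ofReal_le_iff_le_toReal (hfin n)).mp this
  -- negative part
  have hnegint : ∀ n : ℕ, Integrable (fun x => max (min (l x) 0) (-(n : ℝ))) P := by
    intro n
    refine (negpart_integrable P Q hac).abs.mono'
      (((hlmeas.min measurable_const).max measurable_const).aestronglyMeasurable)
      (ae_of_all _ fun x => ?_)
    rw [Real.norm_eq_abs, abs_le]
    constructor
    · calc -(|min (l x) 0|) ≤ min (l x) 0 := neg_abs_le _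
        _ ≤ max (min (l x) 0) (-(n:ℝ)) := le_max_left _ _
    · exact max_le ((min_le_right _ _).trans (abs_nonneg _)) (by
        have : (0:ℝ) ≤ |min (l x) 0| := abs_nonneg _
        have : -(n:ℝ) ≤ 0 := neg_nonpos.mpr (by positivity)
        linarith [abs_nonneg (min (l x) 0)])
  have hKtend : Tendsto (fun n : ℕ => ∫ x, max (min (l x) 0) (-(n : ℝ)) ∂P) atTop
      (𝓝 (∫ x, min (l x) 0 ∂P)) := by
    refine tendsto_integral_of_dominated_convergence (fun x => |min (l x) 0|)
      (fun n => ((hlmeas.min measurable_const).max measurable_const).aestronglyMeasurable)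
      (negpart_integrable P Q hac).abs ?_ ?_
    · intro n
      refine ae_of_all _ fun x => ?_
      rw [Real.norm_eq_abs, abs_le]
      refine ⟨(neg_abs_le _).trans (le_max_left _ _),
        max_le ((min_le_right _ _).trans (abs_nonneg _)) ?_⟩
      have h0 : -(n:ℝ) ≤ 0 := neg_nonpos.mpr (by positivity)
      linarith [abs_nonneg (min (l x) 0)]
    · refine ae_of_all _ fun x => ?_
      refine tendsto_const_nhds.congr' ?_
      rw [EventuallyEq, eventually_atTop]
      refine ⟨⌈|min (l x) 0|⌉₊, fun n hn => ?_⟩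
      have h1 : |min (l x) 0| ≤ (n : ℝ) := (Nat.le_ceil _).trans (by exact_mod_cast hn)
      rw [max_eq_left]
      linarith [neg_abs_le (min (l x) 0)]
  have hsum := hJtend.atTop_add hKtend
  refine hsum.congr fun n => ?_
  rw [← integral_add (hposint n) (hnegint n)]
  refine integral_congr_ae ?_
  filter_upwards [gn_ae_eq P Q hac n] with x hx
  rw [hx, clamp_split]


lemma clamp_lipschitz (n : ℕ) : LipschitzWith 1 (fun t : ℝ => max (min t (n:ℝ)) (-(n:ℝ))) :=
  (LipschitzWith.id.min_const _).max_const _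

lemma exp_sub_exp_le' {u v n : ℝ} (hu : u ≤ n) :
    Real.exp u - Real.exp v ≤ Real.exp n * |u - v| := by
  rcases le_total u v with h | h
  · have h1 : Real.exp u ≤ Real.exp v := Real.exp_le_exp.mpr h
    have h2 := mul_nonneg (Real.exp_pos n).le (abs_nonneg (u - v))
    linarith
  · have hw : 0 ≤ u - v := by linarith
    have h1 : 1 - (u - v) ≤ Real.exp (-(u - v)) := by
      have := Real.add_one_le_exp (-(u - v)); linarith
    have h2 : Real.exp (u - v) * Real.exp (-(u - v)) = 1 := by
      rw [← Real.exp_add]; simp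
    have h3 : Real.exp u = Real.exp v * Real.exp (u - v) := by
      rw [← Real.exp_add]; ring_nf
    have h4 : Real.exp u ≤ Real.exp n := Real.exp_le_exp.mpr hu
    have h5 : |u - v| = u - v := abs_of_nonneg hw
    nlinarith [Real.exp_pos (u - v), Real.exp_pos v, Real.exp_pos (-(u - v)), Real.exp_pos u]

/-- Approximation of the clamped llr by a bounded continuous function. -/
lemma exists_bcf_approx (bigG : X → ℝ) (n : ℕ) (hGmeas : Measurable bigG)
    (hGbd : ∀ x, |bigG x| ≤ n) {ε : ℝ} (hε : 0 < ε) :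
    ∃ f : X →ᵇ ℝ, ∫ x, bigG x ∂P - ε ≤ ∫ x, f x ∂P ∧
      ∫ x, Real.exp (f x) ∂Q ≤ ∫ x, Real.exp (bigG x) ∂Q + ε := by
  have hGint : Integrable bigG (P + Q) := by
    refine (integrable_const (n : ℝ)).mono' hGmeas.aestronglyMeasurable
      (ae_of_all _ fun x => hGbd x)
  set ε' := min ε (ε * Real.exp (-(n : ℝ))) with hε'
  have hε'pos : 0 < ε' := lt_min hε (by positivity)
  obtain ⟨h, hh, -⟩ := hGint.exists_boundedContinuous_integral_sub_le hε'pos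
  set f : X →ᵇ ℝ :=
    BoundedContinuousFunction.comp _ (clamp_lipschitz n) h with hf
  have hfx : ∀ x, f x = max (min (h x) (n:ℝ)) (-(n:ℝ)) := fun x => rfl
  have hfbd : ∀ x, |f x| ≤ n := by
    intro x
    rw [hfx, abs_le]
    exact ⟨le_max_right _ _, max_le (min_le_right _ _) (neg_le_self (by positivity))⟩
  -- pointwise |f x - bigG x| ≤ |h x - bigG x|
  have hdist : ∀ x, |f x - bigG x| ≤ ‖bigG x - h x‖ := by
    intro x
    have hclamp : max (min (bigG x) (n:ℝ)) (-(n:ℝ)) = bigG x := by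
      have h1 := (abs_le.mp (hGbd x)).1
      have h2 := (abs_le.mp (hGbd x)).2
      rw [min_eq_left h2, max_eq_left h1]
    have := (clamp_lipschitz n).dist_le_mul (h x) (bigG x)
    rw [Real.dist_eq, Real.dist_eq, NNReal.coe_one, one_mul, hclamp] at this
    rw [hfx]
    calc |max (min (h x) (n:ℝ)) (-(n:ℝ)) - bigG x| ≤ |h x - bigG x| := this
      _ = ‖bigG x - h x‖ := by rw [Real.norm_eq_abs, abs_sub_comm]
  -- split the L¹ bound over P and Q
  have hnormint : Integrable (fun x => ‖bigG x - h x‖) (P + Q) :=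
    (hGint.sub (h.integrable _)).norm
  have hsplit : ∫ x, ‖bigG x - h x‖ ∂P + ∫ x, ‖bigG x - h x‖ ∂Q ≤ ε' := by
    rw [← integral_add_measure (hnormint.mono_measure (Measure.le_add_right le_rfl))
      (hnormint.mono_measure (Measure.le_add_left le_rfl))]
    exact hh
  have hnn : ∀ (μ : Measure X), 0 ≤ ∫ x, ‖bigG x - h x‖ ∂μ := fun μ =>
    integral_nonneg fun x => norm_nonneg _
  have hP1 : ∫ x, ‖bigG x - h x‖ ∂P ≤ ε' := by
    have := hnn Q; linarith
  have hQ1 : ∫ x, ‖bigG x - h x‖ ∂Q ≤ ε' := by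
    have := hnn P; linarith
  have hPint : Integrable bigG P := hGint.mono_measure (Measure.le_add_right le_rfl)
  have hQintnorm : Integrable (fun x => ‖bigG x - h x‖) Q :=
    hnormint.mono_measure (Measure.le_add_left le_rfl)
  have hPintnorm : Integrable (fun x => ‖bigG x - h x‖) P :=
    hnormint.mono_measure (Measure.le_add_right le_rfl)
  refine ⟨f, ?_, ?_⟩
  · have h1 : ∫ x, bigG x ∂P - ∫ x, f x ∂P = ∫ x, (bigG x - f x) ∂P :=
      (integral_sub hPint (f.integrable P)).symm
    have h2 : ∫ x, (bigG x - f x) ∂P ≤ ∫ x, ‖bigG x - h x‖ ∂P := by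
      refine integral_mono (hPint.sub (f.integrable P)) hPintnorm fun x => ?_
      calc bigG x - f x ≤ |f x - bigG x| := by
            rw [abs_sub_comm]; exact le_abs_self _
        _ ≤ ‖bigG x - h x‖ := hdist x
    have := hP1
    have hε'le : ε' ≤ ε := min_le_left _ _
    linarith
  · have hexpf : Integrable (fun x => Real.exp (f x)) Q := by
      refine (integrable_const (Real.exp (n:ℝ))).mono'
        ((Real.continuous_exp.comp f.continuous).aestronglyMeasurable)
        (ae_of_all _ fun x => ?_)
      rw [Real.norm_eq_abs, abs_of_pos (Real.exp_pos _)]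
      exact Real.exp_le_exp.mpr ((le_abs_self _).trans (hfbd x))
    have hexpG : Integrable (fun x => Real.exp (bigG x)) Q := by
      refine (integrable_const (Real.exp (n:ℝ))).mono'
        (hGmeas.exp.aestronglyMeasurable) (ae_of_all _ fun x => ?_)
      rw [Real.norm_eq_abs, abs_of_pos (Real.exp_pos _)]
      exact Real.exp_le_exp.mpr ((le_abs_self _).trans (hGbd x))
    have h1 : ∫ x, Real.exp (f x) ∂Q - ∫ x, Real.exp (bigG x) ∂Q
        = ∫ x, (Real.exp (f x) - Real.exp (bigG x)) ∂Q :=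
      (integral_sub hexpf hexpG).symm
    have h2 : ∫ x, (Real.exp (f x) - Real.exp (bigG x)) ∂Q
        ≤ ∫ x, Real.exp (n:ℝ) * ‖bigG x - h x‖ ∂Q := by
      refine integral_mono (hexpf.sub hexpG) (hQintnorm.const_mul _) fun x => ?_
      calc Real.exp (f x) - Real.exp (bigG x)
          ≤ Real.exp (n:ℝ) * |f x - bigG x| := exp_sub_exp_le' ((le_abs_self _).trans (hfbd x))
        _ ≤ Real.exp (n:ℝ) * ‖bigG x - h x‖ :=
            mul_le_mul_of_nonneg_left (hdist x) (Real.exp_pos _).le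
    rw [integral_const_mul] at h2
    have h3 : Real.exp (n:ℝ) * ∫ x, ‖bigG x - h x‖ ∂Q ≤ Real.exp (n:ℝ) * ε' :=
      mul_le_mul_of_nonneg_left hQ1 (Real.exp_pos _).le
    have h4 : Real.exp (n:ℝ) * ε' ≤ ε := by
      have h5 : ε' ≤ ε * Real.exp (-(n:ℝ)) := min_le_right _ _
      have h6 := mul_le_mul_of_nonneg_left h5 (Real.exp_pos (n:ℝ)).le
      rw [← mul_assoc] at h6
      calc Real.exp (n:ℝ) * ε' ≤ Real.exp (n:ℝ) * ε * Real.exp (-(n:ℝ)) := by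
            nlinarith [Real.exp_pos (n:ℝ)]
        _ = ε := by rw [mul_comm (Real.exp (n:ℝ)) ε, mul_assoc, ← Real.exp_add]; simp
    linarith



/-- In the non-absolutely-continuous case, the Donsker–Varadhan functional is unbounded. -/
lemma exists_bcf_large_of_not_ac (hac : ¬ P ≪ Q) (M : ℝ) (hM : 0 ≤ M) :
    ∃ f : X →ᵇ ℝ, M ≤ ∫ x, f x ∂P - ∫ x, Real.exp (f x) ∂Q + 1 := by
  -- a measurable set with Q s = 0 < P s
  have h1 : ¬ ∀ s : Set X, MeasurableSet s → Q s = 0 → P s = 0 := by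
    intro h; exact hac (Measure.AbsolutelyContinuous.mk h)
  push_neg at h1
  obtain ⟨s, hs, hQs, hPs⟩ := h1
  set p := P s with hp
  have hppos : 0 < p := pos_iff_ne_zero.mpr hPs
  have hpfin : p ≠ ⊤ := (measure_lt_top P s).ne
  set t := (p / 2).toReal with ht
  have h2t : p / 2 ≠ ⊤ := (ENNReal.div_lt_top hpfin (by norm_num)).ne
  have h2z : p / 2 ≠ 0 := by
    simp only [ne_eq, ENNReal.div_eq_zero_iff, not_or]
    exact ⟨hppos.ne', by norm_num⟩
  have htpos : 0 < t := ENNReal.toReal_pos h2z h2t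
  set m := (M + 1) / t with hm
  have hmpos : 0 < m := div_pos (by linarith) htpos
  -- open U ⊇ s with Q U small
  obtain ⟨U, hsU, hUopen, hQU⟩ := s.exists_isOpen_lt_of_lt
    (ENNReal.ofReal (Real.exp (-m))) (by
      rw [hQs]; exact ENNReal.ofReal_pos.mpr (Real.exp_pos _))
  -- closed K ⊆ U with p/2 < P K
  have hPU : p / 2 < P U := lt_of_lt_of_le (ENNReal.half_lt_self hppos.ne' hpfin)
    ((measure_mono hsU).trans_eq' hp.symm)
  obtain ⟨K, hKU, hKclosed, hPK⟩ := hUopen.exists_lt_isClosed hPU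
  -- Urysohn
  obtain ⟨g, hg0, hg1, hg01⟩ := exists_continuous_zero_one_of_isClosed hKclosed
    (isClosed_compl_iff.mpr hUopen) (Set.disjoint_compl_right_iff_subset.mpr hKU)
  set f : X →ᵇ ℝ := BoundedContinuousFunction.mkOfCompact (m • ((1 : C(X, ℝ)) - g)) with hf
  have hfx : ∀ x, f x = m * (1 - g x) := fun x => rfl
  have hf0 : ∀ x, 0 ≤ f x := fun x => by
    rw [hfx]
    have := (hg01 x).2
    nlinarith
  have hfm : ∀ x, f x ≤ m := fun x => by
    rw [hfx]
    have := (hg01 x).1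
    nlinarith
  have hfK : ∀ x ∈ K, f x = m := fun x hx => by
    rw [hfx, hg0 hx]; simp
  have hfU : ∀ x ∈ Uᶜ, f x = 0 := fun x hx => by
    rw [hfx, hg1 hx]; simp
  refine ⟨f, ?_⟩
  -- lower bound for ∫ f dP
  have hPKfin : P K ≠ ⊤ := (measure_lt_top P K).ne
  have hintf : ∫ x, f x ∂P ≥ m * t := by
    have hKmeas : MeasurableSet K := hKclosed.measurableSet
    have h2 : ∫ x in K, f x ∂P = m * (P K).toReal := by
      rw [setIntegral_congr_fun hKmeas hfK, setIntegral_const, smul_eq_mul, mul_comm]; rfl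
    have h3 : ∫ x in K, f x ∂P ≤ ∫ x, f x ∂P :=
      setIntegral_le_integral (f.integrable P) (ae_of_all _ hf0)
    have h4 : t ≤ (P K).toReal := by
      rw [ht]
      exact ENNReal.toReal_mono hPKfin hPK.le
    nlinarith
  -- upper bound for ∫ exp f dQ
  have hexpf : Integrable (fun x => Real.exp (f x)) Q := by
    refine (integrable_const (Real.exp m)).mono'
      ((Real.continuous_exp.comp f.continuous).aestronglyMeasurable)
      (ae_of_all _ fun x => ?_)
    rw [Real.norm_eq_abs, abs_of_pos (Real.exp_pos _)]
    exact Real.exp_le_exp.mpr (hfm x)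
  have hUmeas : MeasurableSet U := hUopen.measurableSet
  have hintexp : ∫ x, Real.exp (f x) ∂Q ≤ 2 := by
    have hbd : ∀ x, Real.exp (f x)
        ≤ U.indicator (fun _ => Real.exp m) x + 1 := by
      intro x
      by_cases hx : x ∈ U
      · rw [Set.indicator_of_mem hx]
        have := Real.exp_le_exp.mpr (hfm x)
        linarith
      · rw [Set.indicator_of_notMem hx, hfU x hx]
        simp
    have hindint : Integrable (U.indicator (fun _ => Real.exp m)) Q :=
      (integrable_const _).indicator hUmeas
    have h6 : (Q U).toReal ≤ Real.exp (-m) :=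
      ENNReal.toReal_le_of_le_ofReal (Real.exp_pos _).le hQU.le
    have h7 : (Q U).toReal * Real.exp m ≤ 1 := by
      have := mul_le_mul_of_nonneg_right h6 (Real.exp_pos m).le
      rw [← Real.exp_add] at this
      simpa using this
    calc ∫ x, Real.exp (f x) ∂Q
        ≤ ∫ x, (U.indicator (fun _ => Real.exp m) x + 1) ∂Q :=
          integral_mono hexpf (hindint.add (integrable_const 1)) hbd
      _ = (Q U).toReal * Real.exp m + 1 := by
          rw [integral_add hindint (integrable_const 1),
            integral_indicator_const _ hUmeas, integral_const, probReal_univ]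
          simp [smul_eq_mul, Measure.real]
      _ ≤ 2 := by linarith
  have hmt : m * t = M + 1 := by
    rw [hm]
    field_simp
  linarith

lemma exists_bcf_ge {c : ℝ≥0∞} (hc : c < klDiv P Q) :
    ∃ f : X →ᵇ ℝ, c ≤ ENNReal.ofReal (∫ x, f x ∂P - ∫ x, Real.exp (f x) ∂Q + 1) := by
  have hcne : c ≠ ⊤ := (hc.trans_le le_top).ne
  have hc0 : (0:ℝ) ≤ c.toReal := ENNReal.toReal_nonneg
  by_cases hac : P ≪ Q
  · by_cases hint : Integrable (fun x => Real.log (P.rnDeriv Q x).toReal) P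
    · have hkl : klDiv P Q
          = ENNReal.ofReal (∫ x, Real.log (P.rnDeriv Q x).toReal ∂P) := by
        rw [klDiv, if_pos ⟨hac, hint⟩]
      rw [hkl] at hc
      set r := ∫ x, Real.log (P.rnDeriv Q x).toReal ∂P with hr
      have hcr : c.toReal < r := (ENNReal.lt_ofReal_iff_toReal_lt hcne).mp hc
      set δ := (r - c.toReal) / 2 with hδdef
      have hδ : 0 < δ := by rw [hδdef]; linarith
      have h1 := tendsto_integral_gn_of_integrable P Q hac hint
      have h2 : Tendsto (fun n : ℕ => Real.exp (-(n : ℝ))) atTop (𝓝 0) :=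
        Real.tendsto_exp_neg_atTop_nhds_zero.comp tendsto_natCast_atTop_atTop
      have hev1 := h1.eventually (eventually_gt_nhds (show r - δ / 2 < r by linarith))
      have hev2 := h2.eventually (eventually_lt_nhds (show (0:ℝ) < δ / 2 from by linarith))
      obtain ⟨n, hn1, hn2⟩ := (hev1.and hev2).exists
      obtain ⟨f, hf1, hf2⟩ := exists_bcf_approx P Q (gn P Q n) n (gn_meas P Q n)
        (gn_abs_le P Q n) (show (0:ℝ) < δ / 4 by linarith)
      have h3 := integral_exp_gn_le P Q hac n
      have hΦ : c.toReal + δ / 2 ≤ ∫ x, f x ∂P - ∫ x, Real.exp (f x) ∂Q + 1 := by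
        have : r = c.toReal + 2 * δ := by rw [hδdef]; ring
        linarith
      refine ⟨f, (ENNReal.le_ofReal_iff_toReal_le hcne (by linarith)).mpr (by linarith)⟩
    · set M := max c.toReal 0 with hM
      have h1 := tendsto_integral_gn_atTop P Q hac hint
      obtain ⟨n, hn1⟩ := (h1.eventually (eventually_ge_atTop (M + 2))).exists
      obtain ⟨f, hf1, hf2⟩ := exists_bcf_approx P Q (gn P Q n) n (gn_meas P Q n)
        (gn_abs_le P Q n) (show (0:ℝ) < 1/4 by norm_num)
      have h3 := integral_exp_gn_le P Q hac n
      have h4 : Real.exp (-(n:ℝ)) ≤ 1 := by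
        rw [Real.exp_le_one_iff]
        simp
      have hMc : c.toReal ≤ M := le_max_left _ _
      have hM0 : (0:ℝ) ≤ M := le_max_right _ _
      refine ⟨f, (ENNReal.le_ofReal_iff_toReal_le hcne (by linarith)).mpr (by linarith)⟩
  · obtain ⟨f, hf⟩ := exists_bcf_large_of_not_ac P Q hac (max c.toReal 0)
      (le_max_right _ _)
    have hMc : c.toReal ≤ max c.toReal 0 := le_max_left _ _
    have hM0 : (0:ℝ) ≤ max c.toReal 0 := le_max_right _ _
    exact ⟨f, (ENNReal.le_ofReal_iff_toReal_le hcne (by linarith)).mpr (by linarith)⟩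


end KLAux

/-- On a compact metric space, `P ↦ D(P‖P₁)` is sequentially lower semicontinuous with
respect to the topology of weak convergence of probability measures. -/
theorem stmt7 {X : Type*} [MetricSpace X] [CompactSpace X]
    [MeasurableSpace X] [BorelSpace X]
    (P₁ : ProbabilityMeasure X) :
    ∀ (Ps : ℕ → ProbabilityMeasure X) (P₀ : ProbabilityMeasure X),
      Tendsto Ps atTop (𝓝 P₀) →
      klDiv (P₀ : Measure X) (P₁ : Measure X)
        ≤ Filter.atTop.liminf (fun s => klDiv (Ps s : Measure X) (P₁ : Measure X)) := by
  intro Ps P₀ hT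
  refine le_of_forall_lt_imp_le_of_dense fun c hc => ?_
  obtain ⟨f, hf⟩ := exists_bcf_ge (P₀ : Measure X) (P₁ : Measure X) hc
  refine hf.trans ?_
  have hTint := ProbabilityMeasure.tendsto_iff_forall_integral_tendsto.mp hT f
  have hconv : Tendsto (fun s => ENNReal.ofReal
      (∫ x, f x ∂(Ps s : Measure X) - ∫ x, Real.exp (f x) ∂(P₁ : Measure X) + 1)) atTop
      (𝓝 (ENNReal.ofReal
        (∫ x, f x ∂(P₀ : Measure X) - ∫ x, Real.exp (f x) ∂(P₁ : Measure X) + 1))) :=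
    (ENNReal.continuous_ofReal.tendsto _).comp ((hTint.sub_const _).add_const _)
  rw [← hconv.liminf_eq]
  exact liminf_le_liminf (Eventually.of_forall fun s => phi_le_klDiv _ _ f)
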